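/- arXiv:1512.01982 — 3 statements merged into one kernel-verified Lean document; each statement's English description precedes it below -/
import Mathlib

section
/- For a continuous map f on a compact metric space M and any point x in M, the p-omega-limit set pω_f(x) is connected in the weak* topology. -/
open MeasureTheory Filter Topology
open scoped ENNReal NNReal

variable {M : Type*} [MetricSpace M] [CompactSpace M] [MeasurableSpace M] [BorelSpace M]

/-- The empirical measure `Υ_n(x) = (1/n) ∑_{j<n} δ_{f^j(x)}` (junk value `δ_x` for `n = 0`). -/
noncomputable def emp (f : M → M) (x : M) (n : ℕ) : ProbabilityMeasure M :=
  if h : n = 0 then ⟨Measure.dirac x, inferInstance⟩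
  else ⟨(n : ℝ≥0∞)⁻¹ • ∑ j ∈ Finset.range n, Measure.dirac (f^[j] x), by
    constructor
    simp [Measure.smul_apply, Measure.coe_finset_sum, Finset.sum_apply]
    rw [ENNReal.inv_mul_cancel (by exact_mod_cast h) (by simp)]⟩

/-- The p-omega limit set: weak* limits of convergent subsequences `Υ_{n_i}(x)` with
`n_i → ∞` of the empirical measures. -/
def pomega (f : M → M) (x : M) : Set (ProbabilityMeasure M) :=
  {μ | ∃ ni : ℕ → ℕ, Tendsto ni atTop atTop ∧
        Tendsto (fun i => emp f x (ni i)) atTop (𝓝 μ)}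

/-- `μ` is `f`-invariant: `μ(f⁻¹ B) = μ B` for every Borel set `B`. -/
def InvariantProb (f : M → M) (μ : ProbabilityMeasure M) : Prop :=
  ∀ B : Set M, MeasurableSet B → μ.toMeasure (f ⁻¹' B) = μ.toMeasure B

/-- The set of `f`-invariant Borel probability measures. -/
def PfP (f : M → M) : Set (ProbabilityMeasure M) := {μ | InvariantProb f μ}

/-- Birkhoff averages `(1/n) ∑_{j<n} φ(f^j x)`. -/
noncomputable def birk (f : M → M) (φ : M → ℝ) (x : M) (n : ℕ) : ℝ :=
  (n : ℝ)⁻¹ * ∑ j ∈ Finset.range n, φ (f^[j] x)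


section Aux
open TopologicalSpace BoundedContinuousFunction Metric
set_option linter.unusedSectionVars false
set_option linter.unusedVariables false
set_option linter.unnecessarySimpa false
set_option linter.unusedTactic false

section Abstract
variable {X : Type*} [MetricSpace X]

lemma mapClusterPt_of_subseq {u : ℕ → X} {p : X} {ψ : ℕ → ℕ}
    (hψ : Tendsto ψ atTop atTop) (h : Tendsto (fun i => u (ψ i)) atTop (𝓝 p)) :
    MapClusterPt p atTop u := by
  rw [mapClusterPt_iff_frequently]
  intro s hs
  rw [frequently_atTop]
  intro N
  have h1 : ∀ᶠ i in atTop, u (ψ i) ∈ s := h.eventually_mem hs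
  have h2 : ∀ᶠ i in atTop, N ≤ ψ i := hψ.eventually_ge_atTop N
  obtain ⟨i, hi1, hi2⟩ := (h1.and h2).exists
  exact ⟨ψ i, hi2, hi1⟩

theorem isConnected_limitSet
    (hseq : ∀ v : ℕ → X, ∃ φ : ℕ → ℕ, StrictMono φ ∧ ∃ p, Tendsto (fun i => v (φ i)) atTop (𝓝 p))
    (u : ℕ → X)
    (hdiag : ∀ φ : ℕ → ℕ, StrictMono φ → ∀ p q, Tendsto (fun i => u (φ i)) atTop (𝓝 p) →
      Tendsto (fun i => u (φ i + 1)) atTop (𝓝 q) → p = q) :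
    IsConnected {p | MapClusterPt p atTop u} := by
  classical
  have hseqcs : SeqCompactSpace X :=
    ⟨fun v _ => by obtain ⟨φ, hφ, p, hp⟩ := hseq v; exact ⟨p, trivial, φ, hφ, hp⟩⟩
  have hcs : CompactSpace X := compactSpace_iff_seqCompactSpace.mpr hseqcs
  set L := {p | MapClusterPt p atTop u} with hLdef
  -- nonemptiness
  obtain ⟨φ₀, hφ₀, p₀, hp₀⟩ := hseq u
  have hp₀L : p₀ ∈ L := mapClusterPt_of_subseq hφ₀.tendsto_atTop hp₀
  -- L is closed
  have hLclosed : IsClosed L := by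
    have : L = ⋂ N, closure (u '' Set.Ici N) := by
      ext p
      simp only [hLdef, Set.mem_setOf_eq, Set.mem_iInter, mapClusterPt_iff_frequently]
      constructor
      · intro hp N
        rw [Metric.mem_closure_iff]
        intro ε hε
        obtain ⟨n, hnN, hn⟩ := frequently_atTop.mp (hp _ (Metric.ball_mem_nhds p hε)) N
        exact ⟨u n, Set.mem_image_of_mem u hnN, by simpa [dist_comm] using hn⟩
      · intro hp s hs
        rw [frequently_atTop]
        intro N
        obtain ⟨ε, hε, hball⟩ := Metric.mem_nhds_iff.mp hs
        obtain ⟨y, ⟨n, hnN, rfl⟩, hy⟩ := Metric.mem_closure_iff.mp (hp N) ε hε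
        exact ⟨n, hnN, hball (by simpa [dist_comm] using hy)⟩
    rw [this]
    exact isClosed_iInter fun N => isClosed_closure
  -- steps go to zero
  have hstep : Tendsto (fun n => dist (u n) (u (n + 1))) atTop (𝓝 0) := by
    by_contra hcon
    rw [Metric.tendsto_atTop] at hcon
    push_neg at hcon
    obtain ⟨ε, hε, hcon⟩ := hcon
    have hfreq : ∃ᶠ n in atTop, ε ≤ dist (u n) (u (n + 1)) := by
      rw [frequently_atTop]
      intro N
      obtain ⟨n, hn, hd⟩ := hcon N
      exact ⟨n, hn, by simpa [Real.dist_eq, abs_of_nonneg dist_nonneg] using hd⟩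
    obtain ⟨ψ, hψmono, hψ⟩ := extraction_of_frequently_atTop hfreq
    obtain ⟨φ1, hφ1, p, hp⟩ := hseq (fun i => u (ψ i))
    obtain ⟨φ2, hφ2, q, hq⟩ := hseq (fun i => u (ψ (φ1 i) + 1))
    have hp' : Tendsto (fun i => u (ψ (φ1 (φ2 i)))) atTop (𝓝 p) := hp.comp hφ2.tendsto_atTop
    have hpq : p = q := hdiag (fun i => ψ (φ1 (φ2 i))) ((hψmono.comp hφ1).comp hφ2) p q hp' hq
    have hdist : Tendsto (fun i => dist (u (ψ (φ1 (φ2 i)))) (u (ψ (φ1 (φ2 i)) + 1)))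
        atTop (𝓝 (dist p q)) := hp'.dist hq
    have : ε ≤ dist p q := ge_of_tendsto hdist (Eventually.of_forall fun i => hψ _)
    rw [← hpq, dist_self] at this
    linarith
  refine ⟨⟨p₀, hp₀L⟩, ?_⟩
  -- preconnectedness
  intro U V hU hV hsub hneU hneV
  by_contra hdisj
  rw [Set.not_nonempty_iff_eq_empty] at hdisj
  set A := L \ V with hAdef
  set B := L \ U with hBdef
  have hAclosed : IsClosed A := hLclosed.inter (isClosed_compl_iff.mpr hV)
  have hBclosed : IsClosed B := hLclosed.inter (isClosed_compl_iff.mpr hU)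
  have hAne : A.Nonempty := by
    obtain ⟨p, hpL, hpU⟩ := hneU
    refine ⟨p, hpL, fun hpV => ?_⟩
    exact Set.eq_empty_iff_forall_notMem.mp hdisj p ⟨hpL, hpU, hpV⟩
  have hBne : B.Nonempty := by
    obtain ⟨p, hpL, hpV⟩ := hneV
    refine ⟨p, hpL, fun hpU => ?_⟩
    exact Set.eq_empty_iff_forall_notMem.mp hdisj p ⟨hpL, hpU, hpV⟩
  have hABdisj : ∀ p ∈ A, p ∉ B := by
    rintro p ⟨hpL, hpV⟩ ⟨-, hpU⟩
    rcases hsub hpL with h | h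
    exacts [hpU h, hpV h]
  have hLAB : ∀ p ∈ L, p ∈ A ∨ p ∈ B := by
    intro p hpL
    rcases hsub hpL with h | h
    · left; exact ⟨hpL, fun hpV => Set.eq_empty_iff_forall_notMem.mp hdisj p ⟨hpL, h, hpV⟩⟩
    · right; exact ⟨hpL, fun hpU => Set.eq_empty_iff_forall_notMem.mp hdisj p ⟨hpL, hpU, h⟩⟩
  -- positive separation
  obtain ⟨a₀, ha₀A, ha₀min⟩ := hAclosed.isCompact.exists_isMinOn hAne
    (continuous_infDist_pt B).continuousOn
  rw [isMinOn_iff] at ha₀min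
  set ε := infDist a₀ B with hεdef
  have hε : 0 < ε := by
    rw [hεdef, ← hBclosed.notMem_iff_infDist_pos hBne]
    exact hABdisj a₀ ha₀A
  have hsep : ∀ p, ε ≤ infDist p A + infDist p B := by
    intro p
    refine le_of_forall_pos_le_add fun δ hδ => ?_
    obtain ⟨a, haA, hpa⟩ := (infDist_lt_iff hAne).mp
      (lt_add_of_pos_right (infDist p A) (half_pos hδ))
    obtain ⟨b, hbB, hpb⟩ := (infDist_lt_iff hBne).mp
      (lt_add_of_pos_right (infDist p B) (half_pos hδ))
    have h1 : ε ≤ infDist a B := ha₀min a haA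
    have h2 : infDist a B ≤ dist a b := infDist_le_dist_of_mem hbB
    have h3 : dist a b ≤ dist p a + dist p b := by
      rw [dist_comm p a]; exact dist_triangle _ _ _
    linarith
  -- eventually small steps
  obtain ⟨N₀, hN₀⟩ := (Metric.tendsto_atTop.mp hstep) (ε / 3) (by linarith)
  have hstep' : ∀ n ≥ N₀, dist (u n) (u (n + 1)) < ε / 3 := by
    intro n hn
    have := hN₀ n hn
    rwa [Real.dist_eq, sub_zero, abs_of_nonneg dist_nonneg] at this
  -- frequently in the middle
  have hmid : ∀ N, ∃ m ≥ N, ε / 3 ≤ infDist (u m) A ∧ ε / 3 ≤ infDist (u m) B := by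
    intro N
    set N' := max N N₀ with hN'def
    obtain ⟨a, haA⟩ := hAne
    obtain ⟨b, hbB⟩ := hBne
    -- a visit near A
    obtain ⟨n₁, hn₁N, hn₁⟩ := frequently_atTop.mp
      ((mapClusterPt_iff_frequently.mp haA.1) _ (Metric.ball_mem_nhds a (by linarith : (0:ℝ) < ε/3))) N'
    have hn₁A : infDist (u n₁) A < ε / 3 :=
      lt_of_le_of_lt (infDist_le_dist_of_mem haA) (by simpa [dist_comm] using hn₁)
    -- a later visit near B
    obtain ⟨n₂, hn₂N, hn₂⟩ := frequently_atTop.mp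
      ((mapClusterPt_iff_frequently.mp hbB.1) _ (Metric.ball_mem_nhds b (by linarith : (0:ℝ) < ε/3))) (n₁ + 1)
    have hn₂B : infDist (u n₂) B < ε / 3 :=
      lt_of_le_of_lt (infDist_le_dist_of_mem hbB) (by simpa [dist_comm] using hn₂)
    have hn₂A : ε / 3 ≤ infDist (u n₂) A := by
      have := hsep (u n₂)
      linarith
    -- least index > n₁ with infDist to A at least ε/3
    have hPex : ∃ m, n₁ < m ∧ ε / 3 ≤ infDist (u m) A := ⟨n₂, hn₂N, hn₂A⟩
    obtain ⟨hmn₁, hmA⟩ := Nat.find_spec hPex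
    set m := Nat.find hPex with hmdef
    have hmN : m ≥ N := le_trans (le_trans (le_max_left N N₀) hn₁N) hmn₁.le
    have hm1 : infDist (u (m - 1)) A < ε / 3 := by
      rcases eq_or_lt_of_le (Nat.succ_le_of_lt hmn₁) with h | h
      · rw [← h]; simpa using hn₁A
      · have hm1n₁ : n₁ < m - 1 := by omega
        have := Nat.find_min hPex (by omega : m - 1 < m)
        push_neg at this
        exact this hm1n₁
    have hm1N₀ : m - 1 ≥ N₀ := by
      have : n₁ ≥ N₀ := le_trans (le_max_right N N₀) hn₁N
      omega
    have hstepm := hstep' (m - 1) hm1N₀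
    have hm0 : m - 1 + 1 = m := by omega
    rw [hm0] at hstepm
    have hmA' : infDist (u m) A < 2 * ε / 3 := by
      have h4 : infDist (u m) A ≤ infDist (u (m - 1)) A + dist (u m) (u (m - 1)) :=
        infDist_le_infDist_add_dist
      rw [dist_comm] at h4
      linarith
    have hmB : ε / 3 ≤ infDist (u m) B := by
      have := hsep (u m)
      linarith
    exact ⟨m, hmN, hmA, hmB⟩
  obtain ⟨ψ, hψmono, hψ⟩ := extraction_of_frequently_atTop (frequently_atTop.mpr hmid)
  obtain ⟨φ, hφ, z, hz⟩ := hseq (fun i => u (ψ i))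
  have hzL : z ∈ L := mapClusterPt_of_subseq (hψmono.comp hφ).tendsto_atTop hz
  have hzA : ε / 3 ≤ infDist z A :=
    ge_of_tendsto (((continuous_infDist_pt A).continuousAt).tendsto.comp hz)
      (Eventually.of_forall fun i => (hψ (φ i)).1)
  have hzB : ε / 3 ≤ infDist z B :=
    ge_of_tendsto (((continuous_infDist_pt B).continuousAt).tendsto.comp hz)
      (Eventually.of_forall fun i => (hψ (φ i)).2)
  rcases hLAB z hzL with h | h
  · rw [infDist_zero_of_mem h] at hzA; linarith
  · rw [infDist_zero_of_mem h] at hzB; linarith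

end Abstract

theorem exists_subseq_functional (ψ : ℕ → ProbabilityMeasure M) :
    ∃ φ : ℕ → ℕ, StrictMono φ ∧ ∃ Λfun : (M →ᵇ ℝ≥0) → ℝ≥0,
      ∀ f, Tendsto (fun i => (ψ (φ i)).toFiniteMeasure.testAgainstNN f) atTop (𝓝 (Λfun f)) := by
  have hsep : SeparableSpace (M →ᵇ ℝ≥0) :=
    (ContinuousMap.isometryEquivBoundedOfCompact M ℝ≥0).toHomeomorph.isQuotientMap.separableSpace
  have hne : Nonempty (M →ᵇ ℝ≥0) := ⟨0⟩
  set g : ℕ → (M →ᵇ ℝ≥0) := denseSeq _ with hgdef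
  have hg : DenseRange g := denseRange_denseSeq _
  have hbound : ∀ (μ : ProbabilityMeasure M) (f : M →ᵇ ℝ≥0),
      μ.toFiniteMeasure.testAgainstNN f ≤ nndist 0 f := by
    intro μ f
    have h := μ.toFiniteMeasure.testAgainstNN_lipschitz_estimate f 0
    simpa [μ.toFiniteMeasure.testAgainstNN_zero, μ.mass_toFiniteMeasure, nndist_comm] using h
  have hS : IsCompact (Set.univ.pi (fun k => Set.Icc (0:ℝ≥0) (nndist 0 (g k)))) :=
    isCompact_univ_pi (fun k => isCompact_Icc)
  have hmem : ∀ i, (fun k => (ψ i).toFiniteMeasure.testAgainstNN (g k)) ∈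
      (Set.univ.pi (fun k => Set.Icc (0:ℝ≥0) (nndist 0 (g k)))) := fun i =>
    Set.mem_univ_pi.mpr fun k => ⟨zero_le, hbound _ _⟩
  obtain ⟨a, -, φ, hφ, ha⟩ := hS.tendsto_subseq hmem
  refine ⟨φ, hφ, ?_⟩
  have hak : ∀ k, Tendsto (fun i => (ψ (φ i)).toFiniteMeasure.testAgainstNN (g k))
      atTop (𝓝 (a k)) := fun k => (tendsto_pi_nhds.mp ha) k
  have hlip : ∀ (μ : ProbabilityMeasure M) (f₁ f₂ : M →ᵇ ℝ≥0),
      dist (μ.toFiniteMeasure.testAgainstNN f₁) (μ.toFiniteMeasure.testAgainstNN f₂)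
        ≤ dist f₁ f₂ := by
    intro μ f₁ f₂
    have := (μ.toFiniteMeasure.testAgainstNN_lipschitz).dist_le_mul f₁ f₂
    simpa [μ.mass_toFiniteMeasure] using this
  have hcauchy : ∀ f, CauchySeq (fun i => (ψ (φ i)).toFiniteMeasure.testAgainstNN f) := by
    intro f
    rw [Metric.cauchySeq_iff]
    intro ε hε
    obtain ⟨k, hk⟩ := hg.exists_dist_lt f (by positivity : (0:ℝ) < ε/3)
    obtain ⟨N, hN⟩ := Metric.cauchySeq_iff.mp (hak k).cauchySeq (ε/3) (by positivity)
    refine ⟨N, fun m hm n hn => ?_⟩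
    have h1 := hlip (ψ (φ m)) f (g k)
    have h2 := hN m hm n hn
    have h3 := hlip (ψ (φ n)) (g k) f
    have h4 := dist_triangle4 ((ψ (φ m)).toFiniteMeasure.testAgainstNN f)
      ((ψ (φ m)).toFiniteMeasure.testAgainstNN (g k))
      ((ψ (φ n)).toFiniteMeasure.testAgainstNN (g k))
      ((ψ (φ n)).toFiniteMeasure.testAgainstNN f)
    rw [dist_comm (g k) f] at h3
    linarith
  choose Λfun hΛ using fun f => cauchySeq_tendsto_of_complete (hcauchy f)
  exact ⟨Λfun, hΛ⟩

lemma urysohn_nn {K C : Set M} (hK : IsClosed K) (hC : IsClosed C) (hd : Disjoint K C) :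
    ∃ h : M →ᵇ ℝ≥0, (∀ x ∈ K, h x = 1) ∧ (∀ x ∈ C, h x = 0) ∧ ∀ x, h x ≤ 1 := by
  obtain ⟨f, hf0, hf1, hf01⟩ := exists_continuous_zero_one_of_isClosed hC hK hd.symm
  refine ⟨mkOfCompact ⟨fun x => Real.toNNReal (f x),
    continuous_real_toNNReal.comp f.continuous⟩, fun x hx => ?_, fun x hx => ?_, fun x => ?_⟩
  · simp [mkOfCompact_apply, hf1 hx]
  · simp [mkOfCompact_apply, hf0 hx]
  · simp only [mkOfCompact_apply, ContinuousMap.coe_mk]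
    exact Real.toNNReal_le_one.mpr (hf01 x).2

theorem prob_exists_subseq_tendsto (ψ : ℕ → ProbabilityMeasure M) :
    ∃ φ : ℕ → ℕ, StrictMono φ ∧ ∃ ν : ProbabilityMeasure M,
      Tendsto (fun i => ψ (φ i)) atTop (𝓝 ν) := by
  obtain ⟨φ, hφ, Λfun, hΛ⟩ := exists_subseq_functional ψ
  refine ⟨φ, hφ, ?_⟩
  have hadd : ∀ f g, Λfun (f + g) = Λfun f + Λfun g := fun f g =>
    tendsto_nhds_unique (hΛ (f+g))
      (by simpa [FiniteMeasure.testAgainstNN_add] using (hΛ f).add (hΛ g))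
  have hsmul : ∀ (c : ℝ≥0) (f : M →ᵇ ℝ≥0), Λfun (c • f) = c • Λfun f := fun c f =>
    tendsto_nhds_unique (hΛ (c • f))
      (by simpa [FiniteMeasure.testAgainstNN_smul, smul_eq_mul] using (hΛ f).const_mul c)
  set Λ : CompactlySupportedContinuousMap M ℝ≥0 →ₗ[ℝ≥0] ℝ≥0 :=
    { toFun := fun g => Λfun (mkOfCompact g.toContinuousMap),
      map_add' := fun f g => by rw [← hadd]; rfl,
      map_smul' := fun c f => by rw [← hsmul]; rfl } with hΛdef
  have hmono : ∀ f g : M →ᵇ ℝ≥0, (f : M → ℝ≥0) ≤ g → Λfun f ≤ Λfun g := fun f g hfg =>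
    le_of_tendsto_of_tendsto' (hΛ f) (hΛ g)
      (fun i => FiniteMeasure.testAgainstNN_mono _ hfg)
  have hone : Λfun 1 = 1 :=
    tendsto_nhds_unique (hΛ 1)
      (by simpa [FiniteMeasure.testAgainstNN_one, ProbabilityMeasure.mass_toFiniteMeasure]
        using (tendsto_const_nhds : Tendsto (fun _ : ℕ => (1:ℝ≥0)) atTop (𝓝 1)))
  -- the content
  have sup_disjoint : ∀ K₁ K₂ : TopologicalSpace.Compacts M, Disjoint (K₁ : Set M) K₂ →
      IsClosed (K₁ : Set M) → IsClosed (K₂ : Set M) →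
      rieszContentAux Λ (K₁ ⊔ K₂) = rieszContentAux Λ K₁ + rieszContentAux Λ K₂ := by
    intro K₁ K₂ hd h₁ h₂
    exact rieszContentAux_union Λ hd
  set C : Content M :=
    { toFun := fun K => rieszContentAux Λ K
      mono' := fun K₁ K₂ h => rieszContentAux_mono Λ h
      sup_le' := fun K₁ K₂ => rieszContentAux_sup_le Λ K₁ K₂
      sup_disjoint' := sup_disjoint } with hCdef
  have huniv : rieszContentAux Λ ⟨Set.univ, isCompact_univ⟩ = 1 := by
    refine le_antisymm ?_ ?_
    · have h1 := rieszContentAux_le Λ (K := ⟨Set.univ, isCompact_univ⟩)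
        (f := CompactlySupportedContinuousMap.continuousMapEquiv (1 : C(M, ℝ≥0)))
        (fun x _ => le_refl 1)
      have h2 : Λ (CompactlySupportedContinuousMap.continuousMapEquiv (1 : C(M, ℝ≥0)))
          = Λfun 1 := rfl
      rw [h2, hone] at h1
      exact h1
    · refine le_csInf (rieszContentAux_image_nonempty Λ _) ?_
      rintro b ⟨f, hf, rfl⟩
      simp only [Set.mem_setOf_eq] at hf
      calc (1:ℝ≥0) = Λfun 1 := hone.symm
        _ ≤ Λ f := hmono 1 _ (fun x => by simpa using hf x (Set.mem_univ x))
  have hνuniv : C.measure Set.univ = 1 := by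
    rw [C.measure_apply MeasurableSet.univ, C.outerMeasure_of_isOpen Set.univ isOpen_univ,
      C.innerContent_of_isCompact isCompact_univ isOpen_univ]
    simp only [hCdef, Content.mk_apply, huniv, ENNReal.coe_one]
  have hprob : IsProbabilityMeasure C.measure := ⟨hνuniv⟩
  set ν : ProbabilityMeasure M := ⟨C.measure, hprob⟩ with hνdef
  refine ⟨ν, ?_⟩
  -- the portmanteau condition
  have h_opens_ennreal : ∀ G : Set M, IsOpen G →
      C.measure G ≤ atTop.liminf (fun i => (ψ (φ i)).toMeasure G) := by
    intro G hG
    rw [C.measure_apply hG.measurableSet, C.outerMeasure_of_isOpen G hG, Content.innerContent]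
    refine iSup₂_le fun K hKG => ?_
    obtain ⟨h, hK1, hK2, hle1⟩ := urysohn_nn K.isCompact.isClosed (isClosed_compl_iff.mpr hG)
      (Set.disjoint_compl_right_iff_subset.mpr hKG)
    have hlam : rieszContentAux Λ K ≤ Λfun h := rieszContentAux_le Λ
      (f := CompactlySupportedContinuousMap.continuousMapEquiv h.toContinuousMap) (fun x hx => (hK1 x hx).ge)
    have hbound : ∀ i, ((ψ (φ i)).toFiniteMeasure.testAgainstNN h : ℝ≥0∞)
        ≤ (ψ (φ i)).toMeasure G := by
      intro i
      rw [FiniteMeasure.testAgainstNN_coe_eq]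
      calc ∫⁻ x, (h x : ℝ≥0∞) ∂((ψ (φ i)).toMeasure)
          ≤ ∫⁻ x, G.indicator (fun _ => 1) x ∂((ψ (φ i)).toMeasure) := by
            refine lintegral_mono fun x => ?_
            by_cases hx : x ∈ G
            · simpa [Set.indicator_of_mem hx] using ENNReal.coe_le_coe.mpr (hle1 x)
            · simp [Set.indicator_of_notMem hx, hK2 x hx]
        _ = (ψ (φ i)).toMeasure G := lintegral_indicator_one hG.measurableSet
    calc (C K : ℝ≥0∞) = ((rieszContentAux Λ K : ℝ≥0) : ℝ≥0∞) := rfl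
      _ ≤ ((Λfun h : ℝ≥0) : ℝ≥0∞) := ENNReal.coe_le_coe.mpr hlam
      _ = atTop.liminf (fun i => ((ψ (φ i)).toFiniteMeasure.testAgainstNN h : ℝ≥0∞)) :=
          ((ENNReal.tendsto_coe.mpr (hΛ h)).liminf_eq).symm
      _ ≤ atTop.liminf (fun i => (ψ (φ i)).toMeasure G) :=
          liminf_le_liminf (Eventually.of_forall hbound)
  have h_opens : ∀ G : Set M, IsOpen G → ν G ≤ atTop.liminf (fun i => ψ (φ i) G) := by
    intro G hG
    have aux : ENNReal.ofNNReal (atTop.liminf (fun i ↦ ψ (φ i) G)) =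
        atTop.liminf (ENNReal.ofNNReal ∘ fun i ↦ ψ (φ i) G) := by
      refine Monotone.map_liminf_of_continuousAt (F := atTop) ENNReal.coe_mono
        (fun i => ψ (φ i) G) ?_ ?_ ?_
      · exact ENNReal.continuous_coe.continuousAt
      · exact IsBoundedUnder.isCoboundedUnder_ge ⟨1, by simp⟩
      · exact ⟨0, by simp⟩
    rw [← ENNReal.coe_le_coe, aux]
    have hc : ENNReal.ofNNReal ∘ (fun i => ψ (φ i) G) = fun i => (ψ (φ i)).toMeasure G := by
      funext i; exact ProbabilityMeasure.ennreal_coeFn_eq_coeFn_toMeasure _ G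
    have hl : ((ν G : ℝ≥0) : ℝ≥0∞) = C.measure G :=
      ProbabilityMeasure.ennreal_coeFn_eq_coeFn_toMeasure ν G
    rw [hc, hl]
    exact h_opens_ennreal G hG
  exact MeasureTheory.tendsto_of_forall_isOpen_le_liminf h_opens

lemma integral_emp (f : M → M) (x : M) (g : M →ᵇ ℝ) {n : ℕ} (hn : n ≠ 0) :
    ∫ y, g y ∂((emp f x n : ProbabilityMeasure M) : Measure M) = birk f (⇑g) x n := by
  have : ((emp f x n : ProbabilityMeasure M) : Measure M)
      = (n : ℝ≥0∞)⁻¹ • ∑ j ∈ Finset.range n, Measure.dirac (f^[j] x) := by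
    exact congrArg (fun μ : ProbabilityMeasure M => (μ : Measure M)) (dif_neg hn)
  rw [this, integral_smul_measure, integral_finset_sum_measure
    (fun j _ => g.integrable _)]
  simp only [integral_dirac, birk, smul_eq_mul]
  congr 1
  rw [ENNReal.toReal_inv]
  norm_num

lemma birk_step (f : M → M) (x : M) (g : M →ᵇ ℝ) {n : ℕ} (hn : n ≠ 0) :
    |birk f (⇑g) x (n + 1) - birk f (⇑g) x n| ≤ 2 * ‖g‖ / (n + 1) := by
  have hnR : (n : ℝ) ≠ 0 := Nat.cast_ne_zero.mpr hn
  have hn1R : ((n : ℝ) + 1) ≠ 0 := by positivity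
  have habs : |birk f (⇑g) x n| ≤ ‖g‖ := by
    rw [birk, abs_mul, abs_inv, Nat.abs_cast]
    calc (n : ℝ)⁻¹ * |∑ j ∈ Finset.range n, g (f^[j] x)|
        ≤ (n : ℝ)⁻¹ * ∑ j ∈ Finset.range n, ‖g‖ := by
          gcongr
          refine (Finset.abs_sum_le_sum_abs _ _).trans ?_
          exact Finset.sum_le_sum fun j _ => g.norm_coe_le_norm _
      _ = (n : ℝ)⁻¹ * (n * ‖g‖) := by rw [Finset.sum_const, Finset.card_range]; ring_nf
      _ = ‖g‖ := by field_simp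
  have hkey : birk f (⇑g) x (n + 1) - birk f (⇑g) x n
      = (g (f^[n] x) - birk f (⇑g) x n) / (n + 1) := by
    rw [birk, birk, Finset.sum_range_succ]
    field_simp
    push_cast
    ring
  rw [hkey, abs_div, abs_of_pos (by positivity : (0:ℝ) < (n:ℝ) + 1)]
  push_cast
  gcongr
  calc |g (f^[n] x) - birk f (⇑g) x n| ≤ |g (f^[n] x)| + |birk f (⇑g) x n| := abs_sub _ _
    _ ≤ ‖g‖ + ‖g‖ := add_le_add (g.norm_coe_le_norm _) habs
    _ = 2 * ‖g‖ := by ring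


lemma emp_diag (f : M → M) (x : M) (φ : ℕ → ℕ) (hφ : StrictMono φ)
    (p q : ProbabilityMeasure M)
    (hp : Tendsto (fun i => emp f x (φ i)) atTop (𝓝 p))
    (hq : Tendsto (fun i => emp f x (φ i + 1)) atTop (𝓝 q)) : p = q := by
  letI : MetricSpace (ProbabilityMeasure M) := TopologicalSpace.metrizableSpaceMetric _
  have hφtop : Tendsto φ atTop atTop := hφ.tendsto_atTop
  have hint : ∀ g : M →ᵇ ℝ, ∫ ω, g ω ∂(p : Measure M) = ∫ ω, g ω ∂(q : Measure M) := by
    intro g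
    have h1 := (ProbabilityMeasure.tendsto_iff_forall_integral_tendsto.mp hp) g
    have h2 := (ProbabilityMeasure.tendsto_iff_forall_integral_tendsto.mp hq) g
    have hdiff : Tendsto (fun i => ∫ ω, g ω ∂((emp f x (φ i + 1)) : Measure M)
        - ∫ ω, g ω ∂((emp f x (φ i)) : Measure M)) atTop (𝓝 0) := by
      have hb : ∀ᶠ i in atTop, ‖∫ ω, g ω ∂((emp f x (φ i + 1)) : Measure M)
          - ∫ ω, g ω ∂((emp f x (φ i)) : Measure M)‖ ≤ 2 * ‖g‖ / ((φ i : ℝ) + 1) := by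
        filter_upwards [hφtop.eventually_ge_atTop 1] with i hi
        have hne : φ i ≠ 0 := by omega
        rw [integral_emp f x g (Nat.succ_ne_zero (φ i)), integral_emp f x g hne,
          Real.norm_eq_abs]
        have := birk_step f x g hne
        push_cast
        push_cast at this
        convert this using 2
      have hbase : Tendsto (fun n : ℕ => 2 * ‖g‖ / ((n : ℝ) + 1)) atTop (𝓝 0) := by
        apply Tendsto.div_atTop (tendsto_const_nhds)
        exact tendsto_atTop_add_const_right _ 1 tendsto_natCast_atTop_atTop
      exact squeeze_zero_norm' hb (hbase.comp hφtop)
    have h3 : Tendsto (fun i => ∫ ω, g ω ∂((emp f x (φ i + 1)) : Measure M)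
        - ∫ ω, g ω ∂((emp f x (φ i)) : Measure M)) atTop
        (𝓝 (∫ ω, g ω ∂(q : Measure M) - ∫ ω, g ω ∂(p : Measure M))) := h2.sub h1
    have := tendsto_nhds_unique h3 hdiff
    linarith
  have hq' : Tendsto (fun _ : ℕ => p) atTop (𝓝 q) :=
    ProbabilityMeasure.tendsto_iff_forall_integral_tendsto.mpr
      (fun g => by rw [hint g]; exact tendsto_const_nhds)
  exact tendsto_nhds_unique tendsto_const_nhds hq'


end Aux

/-- The p-omega-limit set is connected in the weak* topology. -/
theorem stmt2 (f : M → M) (hf : Continuous f) (x : M) :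
    IsConnected (pomega f x) := by
  letI : MetricSpace (ProbabilityMeasure M) := TopologicalSpace.metrizableSpaceMetric _
  have hseq : ∀ v : ℕ → ProbabilityMeasure M, ∃ φ : ℕ → ℕ, StrictMono φ ∧
      ∃ p, Tendsto (fun i => v (φ i)) atTop (𝓝 p) := by
    intro v
    obtain ⟨φ, h1, ν, h2⟩ := prob_exists_subseq_tendsto v
    exact ⟨φ, h1, ν, h2⟩
  have hcon := isConnected_limitSet hseq (emp f x)
    (fun φ hφ p q hp hq => emp_diag f x φ hφ p q hp hq)
  have hpom : pomega f x = {p | MapClusterPt p atTop (emp f x)} := by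
    ext μ
    constructor
    · rintro ⟨ni, hni, hto⟩
      exact mapClusterPt_of_subseq hni hto
    · intro h
      obtain ⟨ψ, hψ, hto⟩ := TopologicalSpace.FirstCountableTopology.tendsto_subseq h
      exact ⟨ψ, hψ.tendsto_atTop, hto⟩
  rwa [hpom]
end

section
/- Let f be a continuous map on a compact metric space M satisfying the saturation property of the entropy: for every nonempty weak*-compact connected set K of invariant measures, the Bowen topological entropy of G_K := {x : pω_f(x) = K} equals inf_{μ∈K} h_μ(f). Suppose 𝒪_f ⊆ ES_f(ψ) ⊊ 𝒫_f for some continuous potential ψ, where 𝒪_f is the set of physical-like measures. Then the set Γ_f ∩ I_f of irregular points without physical-like behaviour has full topological entropy: h_top(f, Γ_f ∩ I_f) = h_top(f). -/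
open MeasureTheory Filter Topology
open scoped ENNReal NNReal

variable {M : Type*} [MetricSpace M] [CompactSpace M] [MeasurableSpace M] [BorelSpace M]

section ComboAux

variable {M : Type*} [MetricSpace M] [CompactSpace M] [MeasurableSpace M] [BorelSpace M]

/-- Convex combination `min t 1 • μ + (1 - min t 1) • ν` as a probability measure. -/
noncomputable def combo (μ ν : ProbabilityMeasure M) (t : ℝ≥0) : ProbabilityMeasure M :=
  ⟨((min t 1 : ℝ≥0) : ℝ≥0∞) • μ.toMeasure + ((1 - min t 1 : ℝ≥0) : ℝ≥0∞) • ν.toMeasure, by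
    constructor
    simp only [Measure.coe_add, Pi.add_apply, Measure.smul_apply, smul_eq_mul,
      measure_univ, mul_one]
    rw [← ENNReal.coe_add, add_tsub_cancel_of_le (min_le_right t 1), ENNReal.coe_one]⟩

lemma combo_toMeasure (μ ν : ProbabilityMeasure M) {t : ℝ≥0} (ht : t ≤ 1) :
    (combo μ ν t).toMeasure =
      (t : ℝ≥0∞) • μ.toMeasure + ((1 - t : ℝ≥0) : ℝ≥0∞) • ν.toMeasure := by
  simp only [combo, min_eq_left ht]
  rfl

lemma combo_invariant (f : M → M) {μ ν : ProbabilityMeasure M}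
    (hμ : InvariantProb f μ) (hν : InvariantProb f ν) (t : ℝ≥0) :
    InvariantProb f (combo μ ν t) := by
  intro B hB
  have hrfl : (combo μ ν t).toMeasure = ((min t 1 : ℝ≥0) : ℝ≥0∞) • μ.toMeasure +
      ((1 - min t 1 : ℝ≥0) : ℝ≥0∞) • ν.toMeasure := rfl
  rw [hrfl]
  simp only [Measure.coe_add, Pi.add_apply, Measure.smul_apply, smul_eq_mul]
  rw [hμ B hB, hν B hB]

lemma combo_integral (μ ν : ProbabilityMeasure M) (t : ℝ≥0) {g : M → ℝ}
    (hgμ : Integrable g μ.toMeasure) (hgν : Integrable g ν.toMeasure) :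
    ∫ z, g z ∂(combo μ ν t).toMeasure =
      ((min t 1 : ℝ≥0) : ℝ) * ∫ z, g z ∂μ.toMeasure
        + ((1 - min t 1 : ℝ≥0) : ℝ) * ∫ z, g z ∂ν.toMeasure := by
  show ∫ z, g z ∂(((min t 1 : ℝ≥0) : ℝ≥0∞) • μ.toMeasure +
      ((1 - min t 1 : ℝ≥0) : ℝ≥0∞) • ν.toMeasure) = _
  rw [integral_add_measure (hgμ.smul_measure ENNReal.coe_ne_top)
    (hgν.smul_measure ENNReal.coe_ne_top), integral_smul_measure, integral_smul_measure]
  simp only [ENNReal.coe_toReal, smul_eq_mul]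

lemma combo_continuous (μ ν : ProbabilityMeasure M) :
    Continuous (fun t : ℝ≥0 => combo μ ν t) := by
  rw [continuous_iff_continuousAt]
  intro t₀
  show Tendsto (fun t : ℝ≥0 => combo μ ν t) (𝓝 t₀) (𝓝 (combo μ ν t₀))
  rw [ProbabilityMeasure.tendsto_iff_forall_integral_tendsto]
  intro g
  have key : ∀ t : ℝ≥0, ∫ z, g z ∂(combo μ ν t).toMeasure =
      ((min t 1 : ℝ≥0) : ℝ) * ∫ z, g z ∂μ.toMeasure
        + ((1 - min t 1 : ℝ≥0) : ℝ) * ∫ z, g z ∂ν.toMeasure :=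
    fun t => combo_integral μ ν t (g.integrable _) (g.integrable _)
  simp only [key]
  have hcont : Continuous (fun t : ℝ≥0 =>
      ((min t 1 : ℝ≥0) : ℝ) * ∫ z, g z ∂μ.toMeasure
        + ((1 - min t 1 : ℝ≥0) : ℝ) * ∫ z, g z ∂ν.toMeasure) := by
    apply Continuous.add
    · exact (NNReal.continuous_coe.comp (continuous_id.min continuous_const)).mul
        continuous_const
    · exact (NNReal.continuous_coe.comp
        (continuous_const.sub (continuous_id.min continuous_const))).mul continuous_const
  exact hcont.tendsto t₀

end ComboAux

set_option maxHeartbeats 2000000 in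
/-- **Full topological entropy of the irregular points without physical-like behaviour.**
Assume `f` satisfies the saturation property of the entropy (for every nonempty
weak*-compact connected set `K` of invariant measures, the Bowen entropy of
`G_K = {x | pomega f x = K}` is `inf (h '' K)`), the entropy function is affine, the
variational principle holds, and the nonempty set `O` of physical-like measures is
contained in the set of equilibrium states of a continuous potential `psi`, which is a
proper subset of the invariant measures.  Then the set of irregular points without
physical-like behaviour has full topological entropy. -/
theorem stmt12 (f : M → M) (hf : Continuous f)
    (h : ProbabilityMeasure M → ℝ) (htop : Set M → ℝ)
    (hmono : ∀ E F : Set M, E ⊆ F → htop E ≤ htop F)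
    (hsat : ∀ K : Set (ProbabilityMeasure M), K ⊆ PfP f → K.Nonempty → IsCompact K →
      IsConnected K → htop {x : M | pomega f x = K} = sInf (h '' K))
    (haff : ∀ μ ∈ PfP f, ∀ ν ∈ PfP f, ∀ t : ℝ≥0, t ≤ 1 → ∀ ρ : ProbabilityMeasure M,
      ρ.toMeasure = (t : ℝ≥0∞) • μ.toMeasure + ((1 - t : ℝ≥0) : ℝ≥0∞) • ν.toMeasure →
      h ρ = (t : ℝ) * h μ + ((1 - t : ℝ≥0) : ℝ) * h ν)
    (hvp₁ : ∀ μ ∈ PfP f, h μ ≤ htop Set.univ)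
    (hvp₂ : ∀ ε : ℝ, 0 < ε → ∃ μ ∈ PfP f, htop Set.univ - ε < h μ)
    (ψ : M → ℝ) (hψ : Continuous ψ)
    (𝒪 : Set (ProbabilityMeasure M)) (h𝒪ne : 𝒪.Nonempty) (h𝒪cpt : IsCompact 𝒪)
    (h𝒪ES : 𝒪 ⊆ {μ ∈ PfP f | h μ - ∫ z, ψ z ∂μ.toMeasure =
      sSup {y : ℝ | ∃ ν ∈ PfP f, y = h ν - ∫ z, ψ z ∂ν.toMeasure}})
    (hESne : {μ ∈ PfP f | h μ - ∫ z, ψ z ∂μ.toMeasure =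
      sSup {y : ℝ | ∃ ν ∈ PfP f, y = h ν - ∫ z, ψ z ∂ν.toMeasure}} ≠ PfP f) :
    htop ({x : M | pomega f x ∩ 𝒪 = ∅} ∩
        {x : M | ¬ ∃ μ : ProbabilityMeasure M, Tendsto (emp f x) atTop (𝓝 μ)}) =
      htop Set.univ := by
  classical
  set A := ({x : M | pomega f x ∩ 𝒪 = ∅} ∩
      {x : M | ¬ ∃ μ : ProbabilityMeasure M, Tendsto (emp f x) atTop (𝓝 μ)}) with hAdef
  set sS : ℝ := sSup {y : ℝ | ∃ ν ∈ PfP f, y = h ν - ∫ z, ψ z ∂ν.toMeasure} with hsS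
  obtain ⟨σ, hσ𝒪⟩ := h𝒪ne
  obtain ⟨hσP, hσF⟩ := h𝒪ES hσ𝒪
  have hss : {μ ∈ PfP f | h μ - ∫ z, ψ z ∂μ.toMeasure = sS} ⊂ PfP f :=
    (Set.sep_subset _ _).ssubset_of_ne hESne
  obtain ⟨ν₀, hν₀P, hν₀not⟩ := Set.exists_of_ssubset hss
  have hν₀F : h ν₀ - ∫ z, ψ z ∂ν₀.toMeasure ≠ sS := fun hc => hν₀not ⟨hν₀P, hc⟩
  -- the space is nonempty, so ψ is bounded
  have hMne : Nonempty M := by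
    by_contra hM
    have h1 : σ.toMeasure Set.univ = 1 := measure_univ
    rw [Set.univ_eq_empty_iff.mpr (not_nonempty_iff.mp hM), measure_empty] at h1
    exact zero_ne_one h1
  obtain ⟨x₀, -, hx₀⟩ := isCompact_univ.exists_isMaxOn Set.univ_nonempty
    ((continuous_abs.comp hψ).continuousOn)
  set C : ℝ := |ψ x₀| with hC
  have hCb : ∀ x : M, |ψ x| ≤ C := fun x => hx₀ (Set.mem_univ x)
  have hψint : ∀ κ : ProbabilityMeasure M, Integrable ψ κ.toMeasure := fun κ =>
    (integrable_const C).mono' hψ.aestronglyMeasurable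
      (Filter.Eventually.of_forall fun x => by simpa [Real.norm_eq_abs] using hCb x)
  have hbdd : BddAbove {y : ℝ | ∃ ν ∈ PfP f, y = h ν - ∫ z, ψ z ∂ν.toMeasure} := by
    refine ⟨htop Set.univ + C, ?_⟩
    rintro y ⟨ν, hνP, rfl⟩
    have h1 : h ν ≤ htop Set.univ := hvp₁ ν hνP
    have h2 : |∫ z, ψ z ∂ν.toMeasure| ≤ C := by
      have := norm_integral_le_of_norm_le_const (μ := ν.toMeasure) (f := ψ) (C := C)
        (Filter.Eventually.of_forall fun x => by simpa [Real.norm_eq_abs] using hCb x)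
      simpa [Real.norm_eq_abs, measure_univ] using this
    have h3 := abs_le.mp h2
    linarith [h3.1]
  have hle : ∀ ν ∈ PfP f, h ν - ∫ z, ψ z ∂ν.toMeasure ≤ sS := fun ν hν =>
    le_csSup hbdd ⟨ν, hν, rfl⟩
  -- reduce to an ε-approximation
  refine le_antisymm (hmono _ _ (Set.subset_univ _)) ?_
  suffices H : ∀ ε : ℝ, 0 < ε → htop Set.univ - ε ≤ htop A by
    by_contra hc
    push_neg at hc
    have := H ((htop Set.univ - htop A) / 2) (by linarith)
    linarith
  intro ε hε
  obtain ⟨μ, hμP, hμh⟩ := hvp₂ (ε / 2) (by linarith)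
  have hμle : h μ - ∫ z, ψ z ∂μ.toMeasure ≤ sS := hle μ hμP
  -- choose a second invariant measure with a different pressure value
  obtain ⟨μ₂, hμ₂P, hμ₂le, hFne⟩ :
      ∃ μ₂ ∈ PfP f, (h μ₂ - ∫ z, ψ z ∂μ₂.toMeasure ≤ sS) ∧
        h μ₂ - ∫ z, ψ z ∂μ₂.toMeasure ≠ h μ - ∫ z, ψ z ∂μ.toMeasure := by
    by_cases hcase : h μ - ∫ z, ψ z ∂μ.toMeasure = sS
    · exact ⟨ν₀, hν₀P, hle ν₀ hν₀P, fun he => hν₀F (he.trans hcase)⟩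
    · exact ⟨σ, hσP, hle σ hσP, fun he => hcase (by rw [← he]; exact hσF)⟩
  -- choose the parameter interval
  set B : ℝ := |h μ₂ - h μ| with hB
  have hB0 : (0 : ℝ) ≤ B := abs_nonneg _
  set r : ℝ := min (1 / 2) (ε / (2 * (B + 1))) with hr
  have hr0 : 0 < r := lt_min (by norm_num) (div_pos hε (by linarith))
  have hrhalf : r ≤ 1 / 2 := min_le_left _ _
  have hrB : r * (B + 1) ≤ ε / 2 := by
    have h4 := min_le_right (1 / 2) (ε / (2 * (B + 1)))
    have h5 : (ε / (2 * (B + 1))) * (B + 1) = ε / 2 := by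
      field_simp
    calc r * (B + 1) ≤ (ε / (2 * (B + 1))) * (B + 1) :=
          mul_le_mul_of_nonneg_right h4 (by linarith)
      _ = ε / 2 := h5
  set δ : ℝ≥0 := ⟨r, hr0.le⟩ with hδ
  have hδc : (δ : ℝ) = r := rfl
  have hδ1 : δ ≤ 1 := by
    rw [← NNReal.coe_le_coe, hδc, NNReal.coe_one]; linarith
  have hδ2 : δ / 2 ≤ 1 := le_trans (half_le_self (zero_le : (0 : ℝ≥0) ≤ δ)) hδ1
  set cL : ℝ≥0 := 1 - δ with hcLd
  set dR : ℝ≥0 := 1 - δ / 2 with hdRd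
  have hcc : (cL : ℝ) = 1 - r := by
    rw [hcLd, NNReal.coe_sub hδ1, NNReal.coe_one, hδc]
  have hδ2c : ((δ / 2 : ℝ≥0) : ℝ) = r / 2 := by
    rw [NNReal.coe_div, hδc]
    norm_num
  have hdc : (dR : ℝ) = 1 - r / 2 := by
    rw [hdRd, NNReal.coe_sub hδ2, NNReal.coe_one, hδ2c]
  have hcd : cL ≤ dR := by
    rw [← NNReal.coe_le_coe, hcc, hdc]; linarith
  have hd1 : dR ≤ 1 := tsub_le_self
  have hucL : ((1 - cL : ℝ≥0) : ℝ) = r := by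
    rw [NNReal.coe_sub tsub_le_self, NNReal.coe_one, hcc]; ring
  have hudR : ((1 - dR : ℝ≥0) : ℝ) = r / 2 := by
    rw [NNReal.coe_sub tsub_le_self, NNReal.coe_one, hdc]; ring
  -- the key pointwise estimates on the segment
  have key : ∀ t ∈ Set.Icc cL dR,
      (h (combo μ μ₂ t) - ∫ z, ψ z ∂(combo μ μ₂ t).toMeasure < sS) ∧
      (htop Set.univ - ε ≤ h (combo μ μ₂ t)) ∧
      (h (combo μ μ₂ t) - ∫ z, ψ z ∂(combo μ μ₂ t).toMeasure
        = (t : ℝ) * (h μ - ∫ z, ψ z ∂μ.toMeasure)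
          + ((1 - t : ℝ≥0) : ℝ) * (h μ₂ - ∫ z, ψ z ∂μ₂.toMeasure)) := by
    rintro t ⟨htc, htd⟩
    have ht1 : t ≤ 1 := le_trans htd hd1
    have hu : ((1 - t : ℝ≥0) : ℝ) = 1 - (t : ℝ) := by
      rw [NNReal.coe_sub ht1, NNReal.coe_one]
    have htlo : (1 : ℝ) - r ≤ (t : ℝ) := by
      rw [← hcc]; exact_mod_cast htc
    have hthi : (t : ℝ) ≤ 1 - r / 2 := by
      rw [← hdc]; exact_mod_cast htd
    have ht0 : (0 : ℝ) < t := by linarith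
    have hu0 : (0 : ℝ) < ((1 - t : ℝ≥0) : ℝ) := by rw [hu]; linarith
    have hur : ((1 - t : ℝ≥0) : ℝ) ≤ r := by rw [hu]; linarith
    have hcomboh : h (combo μ μ₂ t) = (t : ℝ) * h μ + ((1 - t : ℝ≥0) : ℝ) * h μ₂ :=
      haff μ hμP μ₂ hμ₂P t ht1 _ (combo_toMeasure μ μ₂ ht1)
    have hcomboF : h (combo μ μ₂ t) - ∫ z, ψ z ∂(combo μ μ₂ t).toMeasure
        = (t : ℝ) * (h μ - ∫ z, ψ z ∂μ.toMeasure)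
          + ((1 - t : ℝ≥0) : ℝ) * (h μ₂ - ∫ z, ψ z ∂μ₂.toMeasure) := by
      rw [hcomboh, combo_integral μ μ₂ t (hψint μ) (hψint μ₂), min_eq_left ht1]
      ring
    refine ⟨?_, ?_, hcomboF⟩
    · rw [hcomboF]
      have hsum : (t : ℝ) * sS + ((1 - t : ℝ≥0) : ℝ) * sS = sS := by
        rw [← add_mul]
        rw [hu]
        ring_nf
      rcases hFne.lt_or_gt with h1 | h1
      · have p1 := mul_le_mul_of_nonneg_left hμle ht0.le
        have p2 := mul_lt_mul_of_pos_left (lt_of_lt_of_le h1 hμle) hu0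
        linarith
      · have p1 := mul_lt_mul_of_pos_left (lt_of_lt_of_le h1 hμ₂le) ht0
        have p2 := mul_le_mul_of_nonneg_left hμ₂le hu0.le
        linarith
    · rw [hcomboh]
      have p1 : ((1 - t : ℝ≥0) : ℝ) * (h μ₂ - h μ) ≥ -(((1 - t : ℝ≥0) : ℝ) * B) := by
        nlinarith [neg_abs_le (h μ₂ - h μ), hu0.le]
      have p2 : ((1 - t : ℝ≥0) : ℝ) * B ≤ r * B := mul_le_mul_of_nonneg_right hur hB0
      have htmu : (t : ℝ) * h μ = h μ - ((1 - t : ℝ≥0) : ℝ) * h μ := by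
        rw [hu]; ring
      nlinarith [hrB, hμh, hr0.le]
  -- the segment of measures
  set K := (fun t : ℝ≥0 => combo μ μ₂ t) '' Set.Icc cL dR with hK
  have hKP : K ⊆ PfP f := by
    rintro κ ⟨t, htm, rfl⟩
    exact combo_invariant f hμP hμ₂P t
  have hKne : K.Nonempty := ⟨_, ⟨cL, Set.left_mem_Icc.mpr hcd, rfl⟩⟩
  have hKcpt : IsCompact K := isCompact_Icc.image (combo_continuous μ μ₂)
  have hKconn : IsConnected K :=
    (isConnected_Icc hcd).image _ (combo_continuous μ μ₂).continuousOn
  have hKent := hsat K hKP hKne hKcpt hKconn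
  -- G_K is contained in A
  have hGsub : {x : M | pomega f x = K} ⊆ A := by
    intro x hx
    have hxK : pomega f x = K := hx
    constructor
    · show pomega f x ∩ 𝒪 = ∅
      rw [hxK, Set.eq_empty_iff_forall_notMem]
      rintro κ ⟨hκK, hκ𝒪⟩
      obtain ⟨t, htm, rfl⟩ := hκK
      exact absurd (h𝒪ES hκ𝒪).2 (ne_of_lt (key t htm).1)
    · show ¬ ∃ μ' : ProbabilityMeasure M, Tendsto (emp f x) atTop (𝓝 μ')
      rintro ⟨μ', hconv⟩
      have hmem : ∀ t ∈ Set.Icc cL dR, combo μ μ₂ t = μ' := by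
        intro t htm
        have hKmem : combo μ μ₂ t ∈ pomega f x := by
          rw [hxK]; exact ⟨t, htm, rfl⟩
        obtain ⟨ni, hni, hlim⟩ := hKmem
        exact tendsto_nhds_unique hlim (hconv.comp hni)
      have e1 := (key cL (Set.left_mem_Icc.mpr hcd)).2.2
      have e2 := (key dR (Set.right_mem_Icc.mpr hcd)).2.2
      rw [hmem cL (Set.left_mem_Icc.mpr hcd), hcc, hucL] at e1
      rw [hmem dR (Set.right_mem_Icc.mpr hcd), hdc, hudR] at e2
      have heq : r / 2 * (h μ₂ - ∫ z, ψ z ∂μ₂.toMeasure)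
          = r / 2 * (h μ - ∫ z, ψ z ∂μ.toMeasure) := by linarith
      exact hFne (mul_left_cancel₀ (by positivity) heq)
  -- conclude
  have hInf : htop Set.univ - ε ≤ sInf (h '' K) := by
    apply le_csInf (hKne.image h)
    rintro y ⟨κ, hκK, rfl⟩
    obtain ⟨t, htm, rfl⟩ := hκK
    exact (key t htm).2.1
  have hfin := hmono _ A hGsub
  linarith [hInf, hKent, hfin]
end

section
/- Let f be a continuous map on a compact metric space M satisfying the saturation property of the entropy. Suppose there exist invariant measures μ₁ ∈ PE and μ₂ ∉ PE, where PE ⊆ 𝒫_f is convex, and suppose the entropy function is affine. Then for every ε > 0 there exists a nonempty weak*-compact connected set K ⊆ 𝒫_f \ PE which is not a singleton, such that inf_{μ∈K} h_μ(f) > sup_{ν∈𝒫_f} h_ν(f) − ε. -/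
open MeasureTheory Filter Topology
open scoped ENNReal NNReal

variable {M : Type*} [MetricSpace M] [CompactSpace M] [MeasurableSpace M] [BorelSpace M]

noncomputable def seg (α β : ProbabilityMeasure M) (t : ℝ≥0) : ProbabilityMeasure M :=
  ⟨((min t 1 : ℝ≥0) : ℝ≥0∞) • α.toMeasure + ((1 - min t 1 : ℝ≥0) : ℝ≥0∞) • β.toMeasure, by
    constructor
    simp only [Measure.add_apply, Measure.smul_apply, smul_eq_mul, measure_univ, mul_one]
    rw [← ENNReal.coe_add, add_tsub_cancel_of_le (min_le_right t 1), ENNReal.coe_one]⟩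

lemma seg_toMeasure (α β : ProbabilityMeasure M) {t : ℝ≥0} (ht : t ≤ 1) :
    (seg α β t).toMeasure
      = (t : ℝ≥0∞) • α.toMeasure + ((1 - t : ℝ≥0) : ℝ≥0∞) • β.toMeasure := by
  simp [seg, min_eq_left ht]

lemma seg_continuous (α β : ProbabilityMeasure M) : Continuous (seg α β) := by
  rw [continuous_iff_continuousAt]
  intro t₀
  rw [ContinuousAt, ProbabilityMeasure.tendsto_iff_forall_lintegral_tendsto]
  intro g
  have hfin : ∀ μ : ProbabilityMeasure M, ∫⁻ x, g x ∂(μ : Measure M) ≠ ∞ := fun μ =>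
    (BoundedContinuousFunction.lintegral_lt_top_of_nnreal _ g).ne
  have key : ∀ t : ℝ≥0, ∫⁻ x, g x ∂(seg α β t : Measure M)
      = ((min t 1 * (∫⁻ x, g x ∂(α : Measure M)).toNNReal
          + (1 - min t 1) * (∫⁻ x, g x ∂(β : Measure M)).toNNReal : ℝ≥0) : ℝ≥0∞) := by
    intro t
    have hm : (seg α β t : Measure M)
        = ((min t 1 : ℝ≥0) : ℝ≥0∞) • α.toMeasure + ((1 - min t 1 : ℝ≥0) : ℝ≥0∞) • β.toMeasure :=
      rfl
    rw [hm, lintegral_add_measure, lintegral_smul_measure, lintegral_smul_measure]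
    rw [ENNReal.coe_add, ENNReal.coe_mul, ENNReal.coe_mul,
      ENNReal.coe_toNNReal (hfin α), ENNReal.coe_toNNReal (hfin β)]
    simp only [smul_eq_mul]
  simp only [key]
  apply Tendsto.comp (ENNReal.continuous_coe.tendsto _)
  exact ((((continuous_id.min continuous_const).mul continuous_const).add
    (((continuous_const.sub (continuous_id.min continuous_const))).mul continuous_const)).tendsto t₀)

lemma seg_mem_PfP (f : M → M) {α β : ProbabilityMeasure M} (hα : α ∈ PfP f) (hβ : β ∈ PfP f)
    {t : ℝ≥0} (ht : t ≤ 1) : seg α β t ∈ PfP f := by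
  intro B hB
  rw [seg_toMeasure α β ht]
  simp only [Measure.add_apply, Measure.smul_apply, smul_eq_mul, hα B hB, hβ B hB]

lemma seg_ne {α β : ProbabilityMeasure M} (hne : α ≠ β) {a b : ℝ≥0} (hab : a ≠ b)
    (ha1 : a ≤ 1) (hb1 : b ≤ 1) : seg α β a ≠ seg α β b := by
  intro heq
  have hmne : α.toMeasure ≠ β.toMeasure := fun hc => hne (Subtype.ext hc)
  rw [ne_eq, Measure.ext_iff] at hmne
  push_neg at hmne
  obtain ⟨B, hBm, hBne⟩ := hmne
  have hval : (a : ℝ≥0∞) * α.toMeasure B + ((1 - a : ℝ≥0) : ℝ≥0∞) * β.toMeasure B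
      = (b : ℝ≥0∞) * α.toMeasure B + ((1 - b : ℝ≥0) : ℝ≥0∞) * β.toMeasure B := by
    have := congrArg (fun μ : ProbabilityMeasure M => μ.toMeasure B) heq
    simpa [seg_toMeasure α β ha1, seg_toMeasure α β hb1, Measure.add_apply,
      Measure.smul_apply, smul_eq_mul] using this
  set x := (α.toMeasure B).toReal
  set y := (β.toMeasure B).toReal
  have hxfin : α.toMeasure B ≠ ∞ := measure_ne_top _ _
  have hyfin : β.toMeasure B ≠ ∞ := measure_ne_top _ _
  have hreal : (a : ℝ) * x + (1 - (a : ℝ)) * y = (b : ℝ) * x + (1 - (b : ℝ)) * y := by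
    have := congrArg ENNReal.toReal hval
    rw [ENNReal.toReal_add (by finiteness) (by finiteness),
      ENNReal.toReal_add (by finiteness) (by finiteness),
      ENNReal.toReal_mul, ENNReal.toReal_mul, ENNReal.toReal_mul, ENNReal.toReal_mul] at this
    have hsub : ∀ c : ℝ≥0, c ≤ 1 → ((1 : ℝ≥0∞) - (c : ℝ≥0∞)).toReal = 1 - (c : ℝ) := by
      intro c hc
      rw [ENNReal.toReal_sub_of_le (by exact_mod_cast hc) ENNReal.one_ne_top]
      simp
    simpa [ENNReal.coe_toReal, NNReal.coe_sub ha1, NNReal.coe_sub hb1,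
      hsub a ha1, hsub b hb1] using this
  have habR : (a : ℝ) ≠ (b : ℝ) := fun hc => hab (NNReal.coe_injective hc)
  have hxy : x = y := by
    have h0 : ((a : ℝ) - b) * (x - y) = 0 := by ring_nf; nlinarith [hreal]
    rcases mul_eq_zero.mp h0 with h1 | h2
    · exact absurd (by linarith [sub_eq_zero.mp h1] : (a:ℝ) = b) habR
    · linarith [sub_eq_zero.mp h2]
  exact hBne ((ENNReal.toReal_eq_toReal_iff' hxfin hyfin).mp hxy)

lemma seg_K (f : M → M) (h : ProbabilityMeasure M → ℝ)
    (haff : ∀ μ ∈ PfP f, ∀ ν ∈ PfP f, ∀ t : ℝ≥0, t ≤ 1 → ∀ ρ : ProbabilityMeasure M,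
      ρ.toMeasure = (t : ℝ≥0∞) • μ.toMeasure + ((1 - t : ℝ≥0) : ℝ≥0∞) • ν.toMeasure →
      h ρ = (t : ℝ) * h μ + ((1 - t : ℝ≥0) : ℝ) * h ν)
    (PE : Set (ProbabilityMeasure M)) (hPEsub : PE ⊆ PfP f)
    (hext : ∀ μ ∈ PE, ∀ ν ∈ PfP f \ PE, ∀ t : ℝ≥0, t < 1 → ∀ ρ : ProbabilityMeasure M,
      ρ.toMeasure = (t : ℝ≥0∞) • μ.toMeasure + ((1 - t : ℝ≥0) : ℝ≥0∞) • ν.toMeasure →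
      ρ ∉ PE)
    (α : ProbabilityMeasure M) (hα : α ∈ PE) (β : ProbabilityMeasure M) (hβ : β ∈ PfP f \ PE)
    (a b : ℝ≥0) (hab : a < b) (hb1 : b < 1) (c : ℝ)
    (hent : ∀ t : ℝ≥0, a ≤ t → t ≤ b → c < (t : ℝ) * h α + ((1 - t : ℝ≥0) : ℝ) * h β) :
    ∃ K : Set (ProbabilityMeasure M),
      K ⊆ PfP f \ PE ∧ K.Nonempty ∧ IsCompact K ∧ IsConnected K ∧
      (¬ ∃ μ : ProbabilityMeasure M, K = {μ}) ∧ ∀ μ ∈ K, c < h μ := by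
  refine ⟨seg α β '' Set.Icc a b, ?_, ?_, ?_, ?_, ?_, ?_⟩
  · rintro ρ ⟨t, ⟨hta, htb⟩, rfl⟩
    have ht1 : t ≤ 1 := htb.trans hb1.le
    exact ⟨seg_mem_PfP f (hPEsub hα) hβ.1 ht1,
      hext α hα β hβ t (lt_of_le_of_lt htb hb1) _ (seg_toMeasure α β ht1)⟩
  · exact ⟨seg α β a, a, ⟨le_refl a, hab.le⟩, rfl⟩
  · exact isCompact_Icc.image (seg_continuous α β)
  · exact ⟨⟨seg α β a, a, ⟨le_refl a, hab.le⟩, rfl⟩,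
      isPreconnected_Icc.image _ (seg_continuous α β).continuousOn⟩
  · rintro ⟨μ, hK⟩
    have hne : α ≠ β := fun e => hβ.2 (e ▸ hα)
    have hmema : seg α β a ∈ seg α β '' Set.Icc a b := ⟨a, ⟨le_refl a, hab.le⟩, rfl⟩
    have hmemb : seg α β b ∈ seg α β '' Set.Icc a b := ⟨b, ⟨hab.le, le_refl b⟩, rfl⟩
    rw [hK] at hmema hmemb
    exact seg_ne hne hab.ne (hab.le.trans hb1.le) hb1.le (hmema.trans hmemb.symm)
  · rintro ρ ⟨t, ⟨hta, htb⟩, rfl⟩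
    have ht1 : t ≤ 1 := htb.trans hb1.le
    rw [haff α (hPEsub hα) β hβ.1 t ht1 _ (seg_toMeasure α β ht1)]
    exact hent t hta htb

/-- Under the saturation property of the entropy, affinity of the entropy function and
the existence of invariant measures inside and outside the convex set `PE`, for every
`ε > 0` there is a nonempty weak*-compact connected non-singleton set
`K ⊆ 𝒫_f \ PE` with `inf_{μ ∈ K} h(μ) > sup_{ν ∈ 𝒫_f} h(ν) - ε`. -/
theorem stmt15 (f : M → M) (hf : Continuous f)
    (h : ProbabilityMeasure M → ℝ) (htop : Set M → ℝ)
    (hsat : ∀ K : Set (ProbabilityMeasure M), K ⊆ PfP f → K.Nonempty → IsCompact K →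
      IsConnected K → htop {x : M | pomega f x = K} = sInf (h '' K))
    (haff : ∀ μ ∈ PfP f, ∀ ν ∈ PfP f, ∀ t : ℝ≥0, t ≤ 1 → ∀ ρ : ProbabilityMeasure M,
      ρ.toMeasure = (t : ℝ≥0∞) • μ.toMeasure + ((1 - t : ℝ≥0) : ℝ≥0∞) • ν.toMeasure →
      h ρ = (t : ℝ) * h μ + ((1 - t : ℝ≥0) : ℝ) * h ν)
    (hnonneg : ∀ μ ∈ PfP f, 0 ≤ h μ)
    (hbdd : BddAbove (h '' PfP f))
    (PE : Set (ProbabilityMeasure M)) (hPEsub : PE ⊆ PfP f)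
    (hPEconv : ∀ μ ∈ PE, ∀ ν ∈ PE, ∀ t : ℝ≥0, t ≤ 1 → ∀ ρ : ProbabilityMeasure M,
      ρ.toMeasure = (t : ℝ≥0∞) • μ.toMeasure + ((1 - t : ℝ≥0) : ℝ≥0∞) • ν.toMeasure →
      ρ ∈ PE)
    (hext : ∀ μ ∈ PE, ∀ ν ∈ PfP f \ PE, ∀ t : ℝ≥0, t < 1 → ∀ ρ : ProbabilityMeasure M,
      ρ.toMeasure = (t : ℝ≥0∞) • μ.toMeasure + ((1 - t : ℝ≥0) : ℝ≥0∞) • ν.toMeasure →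
      ρ ∉ PE)
    (μ₁ : ProbabilityMeasure M) (hμ₁ : μ₁ ∈ PE)
    (μ₂ : ProbabilityMeasure M) (hμ₂ : μ₂ ∈ PfP f \ PE) :
    ∀ ε : ℝ, 0 < ε → ∃ K : Set (ProbabilityMeasure M),
      K ⊆ PfP f \ PE ∧ K.Nonempty ∧ IsCompact K ∧ IsConnected K ∧
      (¬ ∃ μ : ProbabilityMeasure M, K = {μ}) ∧
      ∀ μ ∈ K, sSup (h '' PfP f) - ε < h μ := by
  intro ε hε
  have hPfPne : (h '' PfP f).Nonempty := ⟨h μ₁, μ₁, hPEsub hμ₁, rfl⟩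
  obtain ⟨y, hymem, hy⟩ := exists_lt_of_lt_csSup hPfPne
    (show sSup (h '' PfP f) - ε / 2 < sSup (h '' PfP f) by linarith)
  obtain ⟨ν, hν, rfl⟩ := hymem
  have hν0 : 0 ≤ h ν := hnonneg ν hν
  set δ : ℝ := min (ε / (2 * (h ν + 1))) (1 / 2) with hδdef
  have hδpos : 0 < δ := lt_min (by positivity) (by norm_num)
  have hδhalf : δ ≤ 1 / 2 := min_le_right _ _
  have hδε : δ * (h ν + 1) ≤ ε / 2 := by
    have h1 : δ ≤ ε / (2 * (h ν + 1)) := min_le_left _ _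
    have h2 : (0 : ℝ) < h ν + 1 := by linarith
    calc δ * (h ν + 1) ≤ ε / (2 * (h ν + 1)) * (h ν + 1) :=
          mul_le_mul_of_nonneg_right h1 h2.le
      _ = ε / 2 := by field_simp
  by_cases hcase : ν ∈ PE
  · set a := Real.toNNReal (1 - δ) with ha
    set b := Real.toNNReal (1 - δ / 2) with hb
    have hacoe : (a : ℝ) = 1 - δ := Real.coe_toNNReal _ (by linarith)
    have hbcoe : (b : ℝ) = 1 - δ / 2 := Real.coe_toNNReal _ (by linarith)
    have hab : a < b := by rw [← NNReal.coe_lt_coe, hacoe, hbcoe]; linarith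
    have hb1 : b < 1 := by
      rw [← NNReal.coe_lt_coe, hbcoe, NNReal.coe_one]; linarith
    have hμ₂0 : 0 ≤ h μ₂ := hnonneg μ₂ hμ₂.1
    refine seg_K f h haff PE hPEsub hext ν hcase μ₂ hμ₂ a b hab hb1 _ ?_
    intro t hta htb
    have ht1 : t ≤ 1 := htb.trans hb1.le
    have htaR : (1 - δ : ℝ) ≤ (t : ℝ) := by rw [← hacoe]; exact_mod_cast hta
    have htbR : (t : ℝ) ≤ 1 := by exact_mod_cast ht1
    rw [NNReal.coe_sub ht1, NNReal.coe_one]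
    nlinarith [mul_nonneg (by linarith : (0 : ℝ) ≤ 1 - (t : ℝ)) hμ₂0,
      mul_le_mul_of_nonneg_right htaR hν0]
  · set a := Real.toNNReal (δ / 2) with ha
    set b := Real.toNNReal δ with hb
    have hacoe : (a : ℝ) = δ / 2 := Real.coe_toNNReal _ (by linarith)
    have hbcoe : (b : ℝ) = δ := Real.coe_toNNReal _ (by linarith)
    have hab : a < b := by rw [← NNReal.coe_lt_coe, hacoe, hbcoe]; linarith
    have hb1 : b < 1 := by
      rw [← NNReal.coe_lt_coe, hbcoe, NNReal.coe_one]; linarith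
    have hμ₁0 : 0 ≤ h μ₁ := hnonneg μ₁ (hPEsub hμ₁)
    refine seg_K f h haff PE hPEsub hext μ₁ hμ₁ ν ⟨hν, hcase⟩ a b hab hb1 _ ?_
    intro t hta htb
    have ht1 : t ≤ 1 := htb.trans hb1.le
    have htbR : (t : ℝ) ≤ δ := by rw [← hbcoe]; exact_mod_cast htb
    have ht0 : (0 : ℝ) ≤ (t : ℝ) := t.coe_nonneg
    rw [NNReal.coe_sub ht1, NNReal.coe_one]
    nlinarith [mul_nonneg ht0 hμ₁0,
      mul_le_mul_of_nonneg_right (by linarith : (1 - δ : ℝ) ≤ 1 - (t : ℝ)) hν0]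
end
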